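/- Let W be the weight matrix and θ the threshold vector of a Hopfield network on n neurons, and let s be any state. For every cyclic update sequence useq : ℕ → Fin n, there exists N ≤ n · 2^n such that the state seqStates(s, useq, N) obtained after N asynchronous updates along useq is stable. -/

import Mathlib

open Finset

noncomputable section

/-- The net input to neuron `u` in state `s`: `∑_{v ≠ u} W u v * s v`. -/
def netInput {n : ℕ} (W : Matrix (Fin n) (Fin n) ℝ) (s : Fin n → ℝ) (u : Fin n) : ℝ :=
  ∑ v ∈ univ.filter (fun v => v ≠ u), W u v * s v

/-- Asynchronous update of the state `s` at neuron `u`. -/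
def Up {n : ℕ} (W : Matrix (Fin n) (Fin n) ℝ) (θ : Fin n → ℝ) (s : Fin n → ℝ)
    (u : Fin n) : Fin n → ℝ :=
  Function.update s u (if θ u ≤ netInput W s u then 1 else -1)

/-- The energy of a state of a Hopfield network. -/
def energy {n : ℕ} (W : Matrix (Fin n) (Fin n) ℝ) (θ : Fin n → ℝ) (s : Fin n → ℝ) : ℝ :=
  -(1 / 2) * (∑ u, ∑ v ∈ univ.filter (fun v => v ≠ u), W u v * s u * s v)
    + ∑ u, θ u * s u

/-- The trajectory of states obtained by asynchronously updating along the sequence `useq`. -/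
def seqStates {n : ℕ} (W : Matrix (Fin n) (Fin n) ℝ) (θ : Fin n → ℝ)
    (s : Fin n → ℝ) (useq : ℕ → Fin n) : ℕ → (Fin n → ℝ)
  | 0 => s
  | k + 1 => Up W θ (seqStates W θ s useq k) (useq k)

/-- A state is stable if updating any neuron leaves the state unchanged. -/
def isStable {n : ℕ} (W : Matrix (Fin n) (Fin n) ℝ) (θ : Fin n → ℝ)
    (s : Fin n → ℝ) : Prop :=
  ∀ u, Up W θ s u = s

/-- A sequence of neurons is cyclic if it attains every neuron and is periodic with
period `n`. -/
def cyclic {n : ℕ} (useq : ℕ → Fin n) : Prop :=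
  (∀ u, ∃ i, useq i = u) ∧ (∀ i, useq (i + n) = useq i)

lemma energy_update {n : ℕ} (W : Matrix (Fin n) (Fin n) ℝ) (hsymm : W.IsSymm)
    (θ : Fin n → ℝ) (s : Fin n → ℝ) (u : Fin n) (b : ℝ) :
    energy W θ (Function.update s u b)
      = energy W θ s + (b - s u) * (θ u - netInput W s u) := by
  set t := Function.update s u b with ht
  have htu : t u = b := Function.update_self u b s
  have htv : ∀ v, v ≠ u → t v = s v := fun v hv => Function.update_of_ne hv b s
  have hT : ∑ p, θ p * t p = (∑ p, θ p * s p) + θ u * (b - s u) := by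
    have h1 : ∑ p, (θ p * t p - θ p * s p) = θ u * (b - s u) := by
      rw [Finset.sum_eq_single u]
      · rw [htu]; ring
      · intro p _ hp; rw [htv p hp]; ring
      · intro h; exact absurd (Finset.mem_univ u) h
    have h2 := Finset.sum_sub_distrib (f := fun p => θ p * t p)
      (g := fun p => θ p * s p) (s := univ)
    linarith
  have hS : (∑ p, ∑ v ∈ univ.filter (fun v => v ≠ p), W p v * t p * t v)
      = (∑ p, ∑ v ∈ univ.filter (fun v => v ≠ p), W p v * s p * s v)
        + 2 * (b - s u) * netInput W s u := by
    have key : ∑ p, ((∑ v ∈ univ.filter (fun v => v ≠ p), W p v * t p * t v)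
        - (∑ v ∈ univ.filter (fun v => v ≠ p), W p v * s p * s v))
        = 2 * (b - s u) * netInput W s u := by
      have inner : ∀ p, ((∑ v ∈ univ.filter (fun v => v ≠ p), W p v * t p * t v)
          - (∑ v ∈ univ.filter (fun v => v ≠ p), W p v * s p * s v))
          = ∑ v ∈ univ.filter (fun v => v ≠ p), (W p v * t p * t v - W p v * s p * s v) := by
        intro p; rw [Finset.sum_sub_distrib]
      rw [Finset.sum_congr rfl (fun p _ => inner p)]
      rw [← Finset.add_sum_erase (a := u) univ _ (Finset.mem_univ u)]
      have hgu : (∑ v ∈ univ.filter (fun v => v ≠ u), (W u v * t u * t v - W u v * s u * s v))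
          = (b - s u) * netInput W s u := by
        rw [netInput, Finset.mul_sum, Finset.sum_congr rfl]
        intro v hv
        rw [Finset.mem_filter] at hv
        rw [htu, htv v hv.2]; ring
      have hrest : (∑ p ∈ univ.erase u, ∑ v ∈ univ.filter (fun v => v ≠ p),
            (W p v * t p * t v - W p v * s p * s v))
          = (b - s u) * netInput W s u := by
        have each : ∀ p ∈ univ.erase u,
            (∑ v ∈ univ.filter (fun v => v ≠ p), (W p v * t p * t v - W p v * s p * s v))
            = W u p * s p * (b - s u) := by
          intro p hp
          have hpu : p ≠ u := (Finset.mem_erase.mp hp).1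
          rw [Finset.sum_eq_single_of_mem u (by simp [Ne.symm hpu])]
          · rw [htu, htv p hpu, hsymm.apply p u]; ring
          · intro v hv hvu
            have hvp : v ≠ p := (Finset.mem_filter.mp hv).2
            rw [htv v hvu, htv p hpu]; ring
        rw [Finset.sum_congr rfl each, netInput, Finset.mul_sum]
        rw [show (univ.filter (fun v => v ≠ u)) = univ.erase u by
          ext v; simp [Finset.mem_erase, and_comm]]
        exact Finset.sum_congr rfl (fun p _ => by ring)
      rw [hgu, hrest]; ring
    have h2 := Finset.sum_sub_distrib
      (f := fun p => ∑ v ∈ univ.filter (fun v => v ≠ p), W p v * t p * t v)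
      (g := fun p => ∑ v ∈ univ.filter (fun v => v ≠ p), W p v * s p * s v) (s := univ)
    linarith
  rw [energy, energy, hS, hT]; ring

lemma sum_update' {n : ℕ} (s : Fin n → ℝ) (u : Fin n) (b : ℝ) :
    (∑ v, Function.update s u b v) = (∑ v, s v) + (b - s u) := by
  have h1 : ∑ v, (Function.update s u b v - s v) = b - s u := by
    rw [Finset.sum_eq_single u]
    · rw [Function.update_self]
    · intro v _ hv; rw [Function.update_of_ne hv]; ring
    · intro h; exact absurd (Finset.mem_univ u) h
  have h2 := Finset.sum_sub_distrib (f := fun v => Function.update s u b v)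
    (g := fun v => s v) (s := univ)
  linarith

/-- strict decrease relation: `a` strictly better (later) than `b`. -/
def HLt {n : ℕ} (W : Matrix (Fin n) (Fin n) ℝ) (θ : Fin n → ℝ)
    (a b : Fin n → ℝ) : Prop :=
  energy W θ a < energy W θ b ∨
    (energy W θ a = energy W θ b ∧ (∑ v, b v) < (∑ v, a v))

def HLe {n : ℕ} (W : Matrix (Fin n) (Fin n) ℝ) (θ : Fin n → ℝ)
    (a b : Fin n → ℝ) : Prop := HLt W θ a b ∨ a = b

lemma HLt_trans {n : ℕ} {W : Matrix (Fin n) (Fin n) ℝ} {θ : Fin n → ℝ}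
    {a b c : Fin n → ℝ} (h1 : HLt W θ a b) (h2 : HLt W θ b c) : HLt W θ a c := by
  rcases h1 with h1 | ⟨h1, h1'⟩ <;> rcases h2 with h2 | ⟨h2, h2'⟩
  · exact Or.inl (h1.trans h2)
  · exact Or.inl (lt_of_lt_of_le h1 (le_of_eq h2))
  · exact Or.inl (lt_of_le_of_lt (le_of_eq h1) h2)
  · exact Or.inr ⟨h1.trans h2, h2'.trans h1'⟩

lemma HLt_of_HLt_of_HLe {n : ℕ} {W : Matrix (Fin n) (Fin n) ℝ} {θ : Fin n → ℝ}
    {a b c : Fin n → ℝ} (h1 : HLt W θ a b) (h2 : HLe W θ b c) : HLt W θ a c := by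
  rcases h2 with h2 | rfl
  · exact HLt_trans h1 h2
  · exact h1

lemma HLt_of_HLe_of_HLt {n : ℕ} {W : Matrix (Fin n) (Fin n) ℝ} {θ : Fin n → ℝ}
    {a b c : Fin n → ℝ} (h1 : HLe W θ a b) (h2 : HLt W θ b c) : HLt W θ a c := by
  rcases h1 with h1 | rfl
  · exact HLt_trans h1 h2
  · exact h2

lemma HLe_trans {n : ℕ} {W : Matrix (Fin n) (Fin n) ℝ} {θ : Fin n → ℝ}
    {a b c : Fin n → ℝ} (h1 : HLe W θ a b) (h2 : HLe W θ b c) : HLe W θ a c := by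
  rcases h1 with h1 | rfl
  · exact Or.inl (HLt_of_HLt_of_HLe h1 h2)
  · exact h2

lemma HLt_ne {n : ℕ} {W : Matrix (Fin n) (Fin n) ℝ} {θ : Fin n → ℝ}
    {a b : Fin n → ℝ} (h : HLt W θ a b) : a ≠ b := by
  rintro rfl
  rcases h with h | ⟨_, h⟩ <;> exact lt_irrefl _ h

/-- the key single-step trichotomy -/
lemma Up_trichotomy {n : ℕ} (W : Matrix (Fin n) (Fin n) ℝ) (hsymm : W.IsSymm)
    (θ : Fin n → ℝ) (s : Fin n → ℝ) (hs : ∀ v, s v = -1 ∨ s v = 1) (u : Fin n) :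
    HLe W θ (Up W θ s u) s := by
  by_cases h : θ u ≤ netInput W s u
  · rcases hs u with hsu | hsu
    · -- flip -1 → 1
      left
      rcases lt_or_eq_of_le h with h' | h'
      · left
        rw [Up, if_pos h, energy_update W hsymm θ s u 1, hsu]
        nlinarith
      · right
        constructor
        · rw [Up, if_pos h, energy_update W hsymm θ s u 1, h']; ring
        · rw [Up, if_pos h, sum_update', hsu]; linarith
    · right
      rw [Up, if_pos h, ← hsu, Function.update_eq_self]
  · rcases hs u with hsu | hsu
    · right
      rw [Up, if_neg h, ← hsu, Function.update_eq_self]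
    · left; left
      rw [Up, if_neg h, energy_update W hsymm θ s u (-1), hsu]
      push_neg at h
      nlinarith

/-- Convergence of a Hopfield network within `n * 2 ^ n` steps under any cyclic
asynchronous update sequence. -/
theorem hopfieldNet_convergence_cyclic {n : ℕ} (hn : 2 ≤ n)
    (W : Matrix (Fin n) (Fin n) ℝ) (hsymm : W.IsSymm) (hdiag : ∀ u, W u u = 0)
    (θ : Fin n → ℝ) (s : Fin n → ℝ) (hs : ∀ u, s u = -1 ∨ s u = 1) :
    ∀ useq : ℕ → Fin n, cyclic useq →
      ∃ N, N ≤ n * 2 ^ n ∧ isStable W θ (seqStates W θ s useq N) := by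
  intro useq hcyc
  set seq := seqStates W θ s useq with hseq
  have hn0 : 0 < n := by omega
  -- periodicity
  have hper : Function.Periodic useq n := hcyc.2
  have hmod : ∀ i, useq i = useq (i % n) := fun i => (hper.map_mod_nat i).symm
  -- all states are ±1
  have hpm : ∀ k v, seq k v = -1 ∨ seq k v = 1 := by
    intro k
    induction k with
    | zero => exact hs
    | succ k ih =>
      intro v
      show Up W θ (seq k) (useq k) v = -1 ∨ Up W θ (seq k) (useq k) v = 1
      rw [Up]
      by_cases hv : v = useq k
      · subst hv
        rw [Function.update_self]
        split <;> simp
      · rw [Function.update_of_ne hv]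
        exact ih v
  -- single step
  have hstep : ∀ k, HLe W θ (seq (k + 1)) (seq k) := by
    intro k
    exact Up_trichotomy W hsymm θ (seq k) (hpm k) (useq k)
  have hle : ∀ (m k : ℕ), HLe W θ (seq (k + m)) (seq k) := by
    intro m
    induction m with
    | zero => intro k; exact Or.inr rfl
    | succ m ih =>
      intro k
      have := hstep (k + m)
      exact HLe_trans (show HLe W θ (seq (k + (m+1))) (seq (k + m)) from this) (ih k)
  by_cases hC : ∃ k, k < 2 ^ n ∧ ∀ j, k * n ≤ j → j < k * n + n → seq (j + 1) = seq j
  · obtain ⟨k, hk, hwin⟩ := hC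
    refine ⟨k * n, ?_, ?_⟩
    · calc k * n ≤ 2 ^ n * n := Nat.mul_le_mul_right n (le_of_lt hk)
        _ = n * 2 ^ n := Nat.mul_comm _ _
    · intro u
      obtain ⟨i, hi⟩ := hcyc.1 u
      set r := i % n with hr
      have hrn : r < n := Nat.mod_lt i hn0
      have hur : useq r = u := by rw [← hi, hmod i]
      have hconst : ∀ j, j ≤ n → seq (k * n + j) = seq (k * n) := by
        intro j hj
        induction j with
        | zero => rfl
        | succ j ih =>
          have h1 : seq (k * n + j + 1) = seq (k * n + j) :=
            hwin (k * n + j) (Nat.le_add_right _ _) (by omega)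
          rw [show k * n + (j + 1) = k * n + j + 1 by ring, h1, ih (by omega)]
      have huse : useq (k * n + r) = u := by
        rw [hmod (k * n + r), show (k * n + r) % n = r from by
          rw [Nat.add_comm, Nat.add_mul_mod_self_right, Nat.mod_eq_of_lt hrn]]
        exact hur
      have key : Up W θ (seq (k * n + r)) (useq (k * n + r)) = seq (k * n + r + 1) := rfl
      calc Up W θ (seq (k * n)) u
          = Up W θ (seq (k * n + r)) (useq (k * n + r)) := by
            rw [hconst r (le_of_lt hrn), huse]
        _ = seq (k * n + r + 1) := rfl
        _ = seq (k * n + (r + 1)) := by rw [Nat.add_assoc]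
        _ = seq (k * n) := hconst (r + 1) (by omega)
  · push_neg at hC
    exfalso
    -- every window strictly decreases
    have hwin : ∀ k, k < 2 ^ n → HLt W θ (seq ((k + 1) * n)) (seq (k * n)) := by
      intro k hk
      obtain ⟨j, hj1, hj2, hj3⟩ := hC k hk
      have h1 : HLe W θ (seq j) (seq (k * n)) := by
        have := hle (j - k * n) (k * n)
        rwa [Nat.add_sub_cancel' hj1] at this
      have h2 : HLt W θ (seq (j + 1)) (seq j) := by
        rcases hstep j with h | h
        · exact h
        · exact absurd h hj3
      have h3 : HLe W θ (seq ((k + 1) * n)) (seq (j + 1)) := by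
        have hjle : j + 1 ≤ (k + 1) * n := by
          have : (k + 1) * n = k * n + n := by ring
          omega
        have := hle ((k + 1) * n - (j + 1)) (j + 1)
        rwa [Nat.add_sub_cancel' hjle] at this
      exact HLt_of_HLe_of_HLt h3 (HLt_of_HLt_of_HLe h2 h1)
    have hchain : ∀ d k, 1 ≤ d → k + d ≤ 2 ^ n →
        HLt W θ (seq ((k + d) * n)) (seq (k * n)) := by
      intro d
      induction d with
      | zero => intro k h; omega
      | succ d ih =>
        intro k _ hkd
        rcases Nat.eq_zero_or_pos d with rfl | hd
        · exact hwin k (by omega)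
        · have h1 := ih k hd (by omega)
          have h2 : HLt W θ (seq ((k + d + 1) * n)) (seq ((k + d) * n)) :=
            hwin (k + d) (by omega)
          exact HLt_trans (by rwa [show k + (d+1) = k + d + 1 by ring]) h1
    -- injective map into Bool vectors
    set f : Fin (2 ^ n + 1) → (Fin n → Bool) :=
      fun k v => decide (seq (k.1 * n) v = 1) with hf
    have hinj : Function.Injective f := by
      intro a b hab
      by_contra hne
      have hstates : seq (a.1 * n) = seq (b.1 * n) := by
        funext v
        have := congrFun hab v
        simp only [hf, decide_eq_decide] at this
        rcases hpm (a.1 * n) v with h1 | h1 <;> rcases hpm (b.1 * n) v with h2 | h2 <;>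
          simp [h1, h2] at this ⊢ <;> (try norm_num at this ⊢) <;> exact absurd this (by norm_num)
      have hlt : ∀ (x y : Fin (2 ^ n + 1)), x.1 < y.1 →
          HLt W θ (seq (y.1 * n)) (seq (x.1 * n)) := by
        intro x y hxy
        have := hchain (y.1 - x.1) x.1 (by omega) (by omega)
        rwa [Nat.add_sub_cancel' (le_of_lt hxy)] at this
      rcases Nat.lt_or_ge a.1 b.1 with h | h
      · exact HLt_ne (hlt a b h) hstates.symm
      · have h' : b.1 < a.1 := by
          rcases Nat.lt_or_ge b.1 a.1 with h' | h'
          · exact h'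
          · exact absurd (Fin.ext (le_antisymm h' h)) hne
        exact HLt_ne (hlt b a h') hstates
    have hcard := Fintype.card_le_of_injective f hinj
    have hfin : (2 ^ n + 1) ≤ 2 ^ n := by simpa [Fintype.card_fun] using hcard
    omega
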